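/- arXiv:1608.07014 — 3 statements merged into one kernel-verified Lean document; each statement's English description precedes it below -/
import Mathlib

section
/- Let G ⊆ A ⊆ [J] be finite sets, with s₁ = |A \ G|, and let I : [J] → ℝ be any function. For a subset B, let D(B; 1, n) denote the sum of the n smallest values of I over B (with the convention that this sum is +∞ if n > |B|, working in the extended reals). Then for every positive integer n, D(G; 1, n) ≤ D(A; 1 + s₁, n + s₁), where D(A; ℓ, u) denotes the sum of the ℓ-th through u-th smallest values of I over A (again +∞ if u > |A|). -/
open Finset

/-- The `i`-th smallest value (1-indexed) of `I` over the finite set `B`, as an extended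
real, with the convention that it is `⊤` when `i` exceeds `|B|`. -/
noncomputable def ordStat {J : ℕ} (I : Fin J → ℝ) (B : Finset (Fin J)) (i : ℕ) : EReal :=
  (((B.val.map I).sort (· ≤ ·))[i - 1]?).elim ⊤ (fun x => (x : EReal))

/-- `D(B; ℓ, u)`: the sum of the `ℓ`-th through `u`-th smallest values of `I` over `B`,
in the extended reals. -/
noncomputable def Dsum {J : ℕ} (I : Fin J → ℝ) (B : Finset (Fin J)) (ℓ u : ℕ) : EReal :=
  ∑ i ∈ Finset.Icc ℓ u, ordStat I B i

theorem sublist_getElem_le {l₁ l₂ : List ℝ} (h : l₁.Sublist l₂) (h₂ : l₂.Pairwise (· ≤ ·))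
    {k j : ℕ} (hk : k < l₁.length) (hj : j < l₂.length)
    (hkj : k + l₂.length ≤ j + l₁.length) : l₁[k] ≤ l₂[j] := by
  induction h generalizing k j with
  | slnil => simp at hk
  | cons a h ih =>
    rename_i l₁ l₂
    have hlen := h.length_le
    simp only [List.length_cons] at hj hkj
    obtain ⟨j', rfl⟩ : ∃ j', j = j' + 1 := ⟨j - 1, by omega⟩
    rw [List.getElem_cons_succ]
    exact ih (h₂.of_cons) hk (by omega) (by omega)
  | cons_cons a h ih =>
    rename_i l₁ l₂
    have hlen := h.length_le
    simp only [List.length_cons] at hk hj hkj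
    match k with
    | 0 =>
      have := h₂.rel_get_of_le (a := ⟨0, by simp⟩) (b := ⟨j, by simpa using hj⟩) (by simp)
      simpa using this
    | k' + 1 =>
      obtain ⟨j', rfl⟩ : ∃ j', j = j' + 1 := ⟨j - 1, by omega⟩
      rw [List.getElem_cons_succ, List.getElem_cons_succ]
      exact ih (h₂.of_cons) (by omega) (by omega) (by omega)

theorem ordStat_le_aux {J : ℕ} (I : Fin J → ℝ) {G A : Finset (Fin J)} (hGA : G ⊆ A)
    {s₁ : ℕ} (hs₁ : s₁ = (A \ G).card) {i : ℕ} (hi : 1 ≤ i) :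
    ordStat I G i ≤ ordStat I A (i + s₁) := by
  set lG := ((G.val.map I).sort (· ≤ ·)) with hlG
  set lA := ((A.val.map I).sort (· ≤ ·)) with hlA
  have hlenG : lG.length = G.card := by simp [hlG]
  have hlenA : lA.length = A.card := by simp [hlA]
  have hle : G.card ≤ A.card := card_le_card hGA
  have hcard : A.card = G.card + s₁ := by
    rw [hs₁, card_sdiff_of_subset hGA]; omega
  have hsub : lG.Sublist lA := by
    apply List.sublist_of_subperm_of_pairwise _ (Multiset.pairwise_sort _ _)
      (Multiset.pairwise_sort _ _)
    rw [← Multiset.coe_le, Multiset.sort_eq, Multiset.sort_eq]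
    exact Multiset.map_le_map (val_le_iff.2 hGA)
  unfold ordStat
  rw [← hlG, ← hlA]
  by_cases hcase : i - 1 < lG.length
  · have hA : i + s₁ - 1 < lA.length := by omega
    rw [List.getElem?_eq_getElem hcase, List.getElem?_eq_getElem hA]
    simp only [Option.elim]
    exact_mod_cast sublist_getElem_le hsub (Multiset.pairwise_sort _ _) hcase hA (by omega)
  · rw [List.getElem?_eq_none (by omega), List.getElem?_eq_none (by omega)]

/-- If `G ⊆ A` with `s₁ = |A \ G|`, then for every `n ≥ 1`,
`D(G; 1, n) ≤ D(A; 1 + s₁, n + s₁)`. -/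
theorem Dsum_subset_le (J : ℕ) (I : Fin J → ℝ) (G A : Finset (Fin J)) (hGA : G ⊆ A)
    (s₁ : ℕ) (hs₁ : s₁ = (A \ G).card) (n : ℕ) (hn : 1 ≤ n) :
    Dsum I G 1 n ≤ Dsum I A (1 + s₁) (n + s₁) := by
  unfold Dsum
  rw [show Finset.Icc (1 + s₁) (n + s₁) = (Finset.Icc 1 n).map (addRightEmbedding s₁) by
        rw [Finset.map_add_right_Icc],
      Finset.sum_map]
  refine Finset.sum_le_sum fun i hi => ?_
  exact ordStat_le_aux I hGA hs₁ (mem_Icc.1 hi).1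
end

section
/- For every finite subset A of [J], every function I : [J] → ℝ≥0, and every k with 1 ≤ k ≤ J, the sum of the k smallest values of the combined family {I₁(j) : j ∈ A} ∪ {I₀(j) : j ∉ A} equals the minimum over all subsets C ⊆ [J] with |A △ C| ≥ k of the quantity Σ_{i ∈ A\C} I₁(i) + Σ_{j ∈ C\A} I₀(j). -/
open Finset
open scoped NNReal

/-- Pointwise: take-k sum of a sorted list is ≤ sum of any sublist of length ≥ k. -/
lemma take_sum_le_sublist_sum : ∀ {l' l : List ℝ≥0}, List.Sublist l' l → l.Pairwise (· ≤ ·) →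
    (l.take l'.length).sum ≤ l'.sum := by
  intro l' l h
  induction h with
  | slnil => simp
  | cons a h ih =>
    rename_i l₁ l₂
    intro hs
    have hs' : l₂.Pairwise (· ≤ ·) := hs.of_cons
    have hle : l₁.length ≤ l₂.length := h.length_le
    rcases Nat.eq_zero_or_pos l₁.length with h0 | hpos
    · simp [h0]
    · obtain ⟨m, hm⟩ : ∃ m, l₁.length = m + 1 := ⟨l₁.length - 1, by omega⟩
      have hmlt : m < l₂.length := by omega
      have h1 : (a :: l₂).take (m + 1) = a :: l₂.take m := rfl
      have ha : a ≤ l₂[m] := by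
        have := (List.pairwise_cons.mp hs).1
        exact this _ (List.getElem_mem hmlt)
      calc ((a :: l₂).take l₁.length).sum = a + (l₂.take m).sum := by rw [hm, h1]; simp
        _ ≤ (l₂.take m).sum + l₂[m] := by
            rw [add_comm]; exact add_le_add le_rfl ha
        _ = (l₂.take (m+1)).sum := (List.sum_take_succ _ _ hmlt).symm
        _ = (l₂.take l₁.length).sum := by rw [hm]
        _ ≤ l₁.sum := ih hs'
  | cons_cons a h ih =>
    rename_i l₁ l₂
    intro hs
    simp only [List.length_cons, List.take_cons, List.sum_cons]
    exact add_le_add le_rfl (ih hs.of_cons)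

/-- take-k sum of sorted multiset is ≤ sum of any sub-multiset of card ≥ k. -/
lemma take_sort_sum_le {m t : Multiset ℝ≥0} (k : ℕ) (ht : t ≤ m) (hk : k ≤ Multiset.card t) :
    ((m.sort (· ≤ ·)).take k).sum ≤ t.sum := by
  have h1 : (t.toList : Multiset ℝ≥0) ≤ ↑(m.sort (· ≤ ·)) := by
    rw [Multiset.coe_toList, Multiset.sort_eq]; exact ht
  rw [Multiset.coe_le] at h1
  obtain ⟨l, hperm, hsub⟩ := h1
  have hlen : k ≤ l.length := by
    rw [hperm.length_eq, Multiset.length_toList]; exact hk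
  have h2 : List.Sublist (l.take k) (m.sort (· ≤ ·)) := (List.take_sublist _ _).trans hsub
  have h3 : (l.take k).length = k := by simp [hlen]
  have h4 := take_sum_le_sublist_sum h2 (Multiset.pairwise_sort _ _)
  rw [h3] at h4
  have h5 : (l.take k).sum ≤ l.sum := by
    conv_rhs => rw [← List.take_append_drop k l]
    rw [List.sum_append]
    exact le_self_add
  have h6 : l.sum = t.sum := by
    rw [hperm.sum_eq, Multiset.sum_toList]
  exact h4.trans (h5.trans_eq h6)

/-- A sub-multiset of the image of a Finset is the image of a subFinset. -/
lemma exists_finset_of_le_map {α β : Type*} [DecidableEq α] [DecidableEq β] (f : α → β) :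
    ∀ (t : Multiset β) (s : Finset α), t ≤ s.val.map f →
      ∃ u : Finset α, u ⊆ s ∧ u.val.map f = t := by
  intro t
  induction t using Multiset.induction_on with
  | empty => intro s _; exact ⟨∅, by simp, by simp⟩
  | cons a t ih =>
    intro s h
    have ha : a ∈ Multiset.map f s.val := Multiset.mem_of_le h (Multiset.mem_cons_self _ _)
    obtain ⟨b, hb, hfb⟩ := Multiset.mem_map.mp ha
    have hbs : b ∈ s := hb
    have ht : t ≤ (Multiset.map f s.val).erase a := by
      have := Multiset.erase_le_erase a h
      rwa [Multiset.erase_cons_head] at this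
    have herase : (Multiset.map f s.val).erase a = Multiset.map f ((s.erase b).val) := by
      rw [Finset.erase_val]
      have : s.val = b ::ₘ s.val.erase b := (Multiset.cons_erase hb).symm
      rw [this, Multiset.map_cons, hfb, Multiset.erase_cons_head, Multiset.erase_cons_head]
    rw [herase] at ht
    obtain ⟨u, hus, hu⟩ := ih (s.erase b) ht
    have hbu : b ∉ u := fun hc => (Finset.notMem_erase b s) (hus hc)
    refine ⟨insert b u, ?_, ?_⟩
    · intro x hx
      rcases Finset.mem_insert.mp hx with rfl | hx
      · exact hbs
      · exact Finset.erase_subset _ _ (hus hx)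
    · rw [Finset.insert_val_of_notMem hbu, Multiset.map_cons, hfb, hu]

/-- The sum of the `k` smallest values of the combined family
`{I₁(j) : j ∈ A} ∪ {I₀(j) : j ∉ A}` is the least value of
`∑_{i ∈ A\C} I₁(i) + ∑_{j ∈ C\A} I₀(j)` over subsets `C ⊆ [J]` with `|A ∆ C| ≥ k`. -/
theorem sum_k_smallest_isLeast (J k : ℕ) (hk₁ : 1 ≤ k) (hk₂ : k ≤ J)
    (I₁ I₀ : Fin J → ℝ≥0) (A : Finset (Fin J)) :
    IsLeast
      {x : ℝ≥0 | ∃ C : Finset (Fin J), k ≤ (symmDiff A C).card ∧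
        x = ∑ i ∈ A \ C, I₁ i + ∑ j ∈ C \ A, I₀ j}
      ((((A.val.map I₁ + Aᶜ.val.map I₀).sort (· ≤ ·)).take k).sum) := by
  classical
  set f : Fin J → ℝ≥0 := fun i => if i ∈ A then I₁ i else I₀ i with hf
  have hM : A.val.map I₁ + Aᶜ.val.map I₀ = (univ : Finset (Fin J)).val.map f := by
    have h1 : A.val.map I₁ = A.val.map f := by
      apply Multiset.map_congr rfl
      intro x hx
      have : x ∈ A := hx
      simp [hf, this]
    have h2 : Aᶜ.val.map I₀ = Aᶜ.val.map f := by
      apply Multiset.map_congr rfl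
      intro x hx
      have : x ∉ A := by simpa using (by exact hx : x ∈ Aᶜ)
      simp [hf, this]
    have h3 : (univ : Finset (Fin J)).val = A.val + Aᶜ.val := by
      have := Finset.disjUnion_eq_union A Aᶜ disjoint_compl_right
      rw [← Finset.union_compl A, ← this]
      rfl
    rw [h1, h2, h3, Multiset.map_add]
  -- cost equals sum over symmDiff
  have hcost : ∀ C : Finset (Fin J),
      ∑ i ∈ A \ C, I₁ i + ∑ j ∈ C \ A, I₀ j = ∑ i ∈ symmDiff A C, f i := by
    intro C
    have hd : Disjoint (A \ C) (C \ A) := disjoint_sdiff_sdiff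
    have hsd : symmDiff A C = (A \ C) ∪ (C \ A) := rfl
    rw [hsd, Finset.sum_union hd]
    congr 1
    · apply Finset.sum_congr rfl
      intro x hx
      simp [hf, (Finset.mem_sdiff.mp hx).1]
    · apply Finset.sum_congr rfl
      intro x hx
      simp [hf, (Finset.mem_sdiff.mp hx).2]
  rw [hM]
  set M : Multiset ℝ≥0 := (univ : Finset (Fin J)).val.map f with hMdef
  have hcardM : Multiset.card M = J := by simp [hMdef]
  constructor
  · -- membership
    have hsub : ((M.sort (· ≤ ·)).take k : Multiset ℝ≥0) ≤ M := by
      have := (List.take_sublist k (M.sort (· ≤ ·))).subperm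
      rw [← Multiset.coe_le] at this
      calc (↑((M.sort (· ≤ ·)).take k) : Multiset ℝ≥0) ≤ ↑(M.sort (· ≤ ·)) := this
        _ = M := Multiset.sort_eq _ _
    obtain ⟨S, _, hS⟩ := exists_finset_of_le_map f _ univ hsub
    have hlen : ((M.sort (· ≤ ·)).take k).length = k := by
      have : (M.sort (· ≤ ·)).length = J := by
        rw [Multiset.length_sort, hcardM]
      simp [this, hk₂]
    have hScard : S.card = k := by
      have := congrArg Multiset.card hS
      simpa [hlen] using this
    refine ⟨symmDiff A S, ?_, ?_⟩
    · rw [symmDiff_symmDiff_cancel_left, hScard]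
    · rw [hcost, symmDiff_symmDiff_cancel_left]
      have : ∑ i ∈ S, f i = (S.val.map f).sum := rfl
      rw [this, hS]
      simp
  · -- lower bound
    rintro x ⟨C, hC, rfl⟩
    rw [hcost]
    set S := symmDiff A C with hSdef
    have h1 : S.val.map f ≤ M := by
      apply Multiset.map_le_map
      exact Finset.val_le_iff.mpr (Finset.subset_univ S)
    have h2 : k ≤ Multiset.card (S.val.map f) := by
      simpa using hC
    have := take_sort_sum_le k h1 h2
    calc ((M.sort (· ≤ ·)).take k).sum ≤ (S.val.map f).sum := this
      _ = ∑ i ∈ S, f i := rfl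
end

section
/- Let L ≥ 2 and let {ξ_ℓ(n)}_{n ∈ ℕ}, ℓ = 1,…,L, be stochastic processes such that for each ℓ and every ε > 0, Σ_{n=1}^∞ P( |ξ_ℓ(n)/n − μ_ℓ| ≥ ε ) < ∞, with μ_ℓ > 0. Define ν(b₁,…,b_L) = inf{ n ≥ 1 : ξ_ℓ(n) ≥ b_ℓ for all ℓ }. Then E[ν(b₁,…,b_L)] ≤ max_ℓ (b_ℓ/μ_ℓ) · (1 + o(1)) as min_ℓ b_ℓ → ∞; i.e., limsup of E[ν(b)] / max_ℓ(b_ℓ/μ_ℓ) is at most 1. -/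
open MeasureTheory
open scoped ENNReal

/-- First simultaneous crossing time: the least `n ≥ 1` such that `ξ ℓ n ω ≥ b ℓ` for
every `ℓ`, as an extended nonnegative real (`∞` if no such `n` exists). -/
noncomputable def simCrossing {Ω : Type*} {L : ℕ} (ξ : Fin L → ℕ → Ω → ℝ)
    (b : Fin L → ℝ) (ω : Ω) : ℝ≥0∞ :=
  ⨅ n ∈ {n : ℕ | 1 ≤ n ∧ ∀ ℓ, b ℓ ≤ ξ ℓ n ω}, (n : ℝ≥0∞)

/-- Every `x : ℝ≥0∞` is at most the sum of indicators of `(n : ℝ≥0∞) < x`. -/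
lemma le_tsum_indicator_lt (x : ℝ≥0∞) :
    x ≤ ∑' n : ℕ, (if (n : ℝ≥0∞) < x then (1 : ℝ≥0∞) else 0) := by
  rcases eq_or_ne x ⊤ with hx | hx
  · subst hx
    have : ∀ n : ℕ, (if (n : ℝ≥0∞) < ⊤ then (1 : ℝ≥0∞) else 0) = 1 := fun n => by
      simp [ENNReal.natCast_lt_top n]
    rw [tsum_congr this]
    simp [ENNReal.tsum_const_eq_top_of_ne_zero one_ne_zero]
  · set k : ℕ := ⌈x.toReal⌉₊ with hk
    have hxk : x ≤ (k : ℝ≥0∞) := by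
      rw [← ENNReal.ofReal_toReal hx, ← ENNReal.ofReal_natCast]
      exact ENNReal.ofReal_le_ofReal (Nat.le_ceil _)
    refine hxk.trans ?_
    have hone : ∀ n ∈ Finset.range k, (if (n : ℝ≥0∞) < x then (1 : ℝ≥0∞) else 0) = 1 := by
      intro n hn
      rw [if_pos]
      have hn' : (n : ℝ) < x.toReal := Nat.lt_ceil.mp (Finset.mem_range.mp hn)
      rw [← ENNReal.ofReal_toReal hx, ← ENNReal.ofReal_natCast]
      exact ENNReal.ofReal_lt_ofReal_iff_of_nonneg (n.cast_nonneg) |>.mpr hn'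
    have hsum : (∑ n ∈ Finset.range k, (if (n : ℝ≥0∞) < x then (1 : ℝ≥0∞) else 0))
        = (k : ℝ≥0∞) := by
      rw [Finset.sum_congr rfl hone]
      simp
    rw [← hsum]
    exact ENNReal.sum_le_tsum _

/-- Layer-cake upper bound for the lower integral of an arbitrary (possibly
nonmeasurable) function. -/
lemma lintegral_le_tsum_meas {Ω : Type*} [MeasurableSpace Ω] (μ : Measure Ω)
    (f : Ω → ℝ≥0∞) :
    ∫⁻ ω, f ω ∂μ ≤ ∑' n : ℕ, μ {ω | (n : ℝ≥0∞) < f ω} := by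
  rw [← iSup_lintegral_measurable_le_eq_lintegral]
  refine iSup_le fun g => iSup_le fun hg => iSup_le fun hgf => ?_
  have h1 : ∫⁻ ω, g ω ∂μ ≤ ∑' n : ℕ, μ {ω | (n : ℝ≥0∞) < g ω} := by
    have hmeas : ∀ n : ℕ, MeasurableSet {ω | (n : ℝ≥0∞) < g ω} := fun n =>
      hg measurableSet_Ioi
    calc ∫⁻ ω, g ω ∂μ
        ≤ ∫⁻ ω, ∑' n : ℕ, Set.indicator {ω | (n : ℝ≥0∞) < g ω} (fun _ => 1) ω ∂μ := by
          refine lintegral_mono fun ω => ?_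
          refine (le_tsum_indicator_lt (g ω)).trans (le_of_eq (tsum_congr fun n => ?_))
          simp [Set.indicator_apply]
      _ = ∑' n : ℕ, ∫⁻ ω, Set.indicator {ω | (n : ℝ≥0∞) < g ω} (fun _ => 1) ω ∂μ :=
          lintegral_tsum fun n => (measurable_const.indicator (hmeas n)).aemeasurable
      _ = ∑' n : ℕ, μ {ω | (n : ℝ≥0∞) < g ω} := by
          refine tsum_congr fun n => ?_
          rw [lintegral_indicator_const (hmeas n), one_mul]
  refine h1.trans (ENNReal.tsum_le_tsum fun n => measure_mono fun ω hω => ?_)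
  exact lt_of_lt_of_le hω (hgf ω)

/-- Under complete convergence `ξ_ℓ(n)/n → μ_ℓ > 0`, the expected first simultaneous
crossing time satisfies `E[ν(b)] ≤ (1 + o(1)) · max_ℓ b_ℓ/μ_ℓ` as `min_ℓ b_ℓ → ∞`. -/
theorem expected_sim_crossing_upper_bound
    {Ω : Type*} [MeasurableSpace Ω] (P : Measure Ω) [IsProbabilityMeasure P]
    (L : ℕ) (hL : 2 ≤ L) (ξ : Fin L → ℕ → Ω → ℝ) (μ : Fin L → ℝ)
    (hμ : ∀ ℓ, 0 < μ ℓ)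
    (hcc : ∀ ℓ, ∀ ε > (0 : ℝ),
      (∑' n : ℕ, P {ω | ε ≤ |ξ ℓ n ω / n - μ ℓ|}) ≠ ⊤) :
    ∀ ε > (0 : ℝ), ∃ M : ℝ, ∀ b : Fin L → ℝ, (∀ ℓ, M ≤ b ℓ) →
      ∫⁻ ω, simCrossing ξ b ω ∂P ≤
        ENNReal.ofReal ((1 + ε) * ⨆ ℓ : Fin L, b ℓ / μ ℓ) := by
  intro ε hε
  set η : ℝ := ε / 2 with hηdef
  have hη0 : 0 < η := by positivity
  have h1η : 0 < 1 + η := by linarith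
  -- the per-process deviation thresholds
  set δ : Fin L → ℝ := fun ℓ => η * μ ℓ / (1 + η) with hδdef
  have hδ0 : ∀ ℓ, 0 < δ ℓ := fun ℓ => div_pos (mul_pos hη0 (hμ ℓ)) h1η
  -- the total tail-sum constant
  set C : ℝ≥0∞ := ∑ ℓ : Fin L, ∑' n : ℕ, P {ω | δ ℓ ≤ |ξ ℓ n ω / n - μ ℓ|} with hCdef
  have hCt : C ≠ ⊤ := by
    rw [hCdef]
    exact (ENNReal.sum_lt_top.mpr fun ℓ _ =>
      lt_top_iff_ne_top.mpr (hcc ℓ (δ ℓ) (hδ0 ℓ))).ne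
  set Cr : ℝ := C.toReal with hCrdef
  have hCr0 : 0 ≤ Cr := ENNReal.toReal_nonneg
  have hL0 : 0 < L := by omega
  set ℓ0 : Fin L := ⟨0, hL0⟩ with hℓ0
  refine ⟨max 1 (μ ℓ0 * (1 + Cr) / η), fun b hb => ?_⟩
  set T : ℝ := ⨆ ℓ : Fin L, b ℓ / μ ℓ with hTdef
  have hb1 : ∀ ℓ, (1 : ℝ) ≤ b ℓ := fun ℓ => (le_max_left _ _).trans (hb ℓ)
  have hTb : ∀ ℓ, b ℓ / μ ℓ ≤ T := fun ℓ =>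
    le_ciSup (f := fun ℓ : Fin L => b ℓ / μ ℓ) (Set.Finite.bddAbove (Set.finite_range _)) ℓ
  have hT0 : 0 < T :=
    lt_of_lt_of_le (div_pos (by linarith [hb1 ℓ0]) (hμ ℓ0)) (hTb ℓ0)
  -- the key quantitative inequality from the choice of M
  have hkey : 1 + Cr ≤ η * T := by
    have h1 : μ ℓ0 * (1 + Cr) / η ≤ b ℓ0 := (le_max_right _ _).trans (hb ℓ0)
    have h2 : (1 + Cr) / η ≤ b ℓ0 / μ ℓ0 := by
      rw [div_le_div_iff₀ hη0 (hμ ℓ0)]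
      have := (div_le_iff₀ hη0).mp h1
      nlinarith
    have h3 : (1 + Cr) / η ≤ T := h2.trans (hTb ℓ0)
    have := (div_le_iff₀' hη0).mp h3
    linarith
  set K : ℕ := ⌈(1 + η) * T⌉₊ with hKdef
  have hK1 : 1 ≤ K := Nat.one_le_iff_ne_zero.mpr (by
    have : 0 < (1 + η) * T := mul_pos h1η hT0
    simpa [hKdef] using (Nat.ceil_pos.mpr this).ne')
  -- inclusion: past time K, failure to have crossed forces a large deviation
  have hincl : ∀ n : ℕ, K ≤ n →
      {ω | (n : ℝ≥0∞) < simCrossing ξ b ω} ⊆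
        ⋃ ℓ : Fin L, {ω | δ ℓ ≤ |ξ ℓ n ω / n - μ ℓ|} := by
    intro n hn ω hω
    have hn1 : 1 ≤ n := hK1.trans hn
    have hnR : (1 + η) * T ≤ (n : ℝ) := (Nat.ceil_le.mp hn)
    have hn0 : (0 : ℝ) < n := by exact_mod_cast hn1
    have hex : ∃ ℓ, ξ ℓ n ω < b ℓ := by
      by_contra hcon
      push_neg at hcon
      have hmem : n ∈ {m : ℕ | 1 ≤ m ∧ ∀ ℓ, b ℓ ≤ ξ ℓ m ω} := ⟨hn1, hcon⟩
      have : simCrossing ξ b ω ≤ (n : ℝ≥0∞) := biInf_le _ hmem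
      exact absurd (lt_of_lt_of_le hω this) (lt_irrefl _)
    obtain ⟨ℓ, hℓ⟩ := hex
    refine Set.mem_iUnion.mpr ⟨ℓ, ?_⟩
    have hTℓ : b ℓ / μ ℓ ≤ T := hTb ℓ
    have hbn : (1 + η) * b ℓ ≤ (n : ℝ) * μ ℓ := by
      have h4 : (1 + η) * (b ℓ / μ ℓ) ≤ (n : ℝ) :=
        le_trans (mul_le_mul_of_nonneg_left hTℓ h1η.le) hnR
      have hμℓ := hμ ℓ
      have h5 : (1 + η) * (b ℓ / μ ℓ) * μ ℓ = (1 + η) * b ℓ := by field_simp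
      nlinarith
    have hfrac : ξ ℓ n ω / n ≤ μ ℓ - δ ℓ := by
      rw [div_le_iff₀ hn0]
      have hδeq : δ ℓ = η * μ ℓ / (1 + η) := rfl
      have hb2 : b ℓ ≤ (n : ℝ) * μ ℓ / (1 + η) := by
        rw [le_div_iff₀ h1η]; linarith
      have hrhs : ((μ ℓ) - δ ℓ) * n = (n : ℝ) * μ ℓ / (1 + η) := by
        rw [hδeq]; field_simp; ring
      rw [hrhs]
      linarith
    show δ ℓ ≤ |ξ ℓ n ω / n - μ ℓ|
    refine le_abs.mpr (Or.inr ?_)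
    linarith
  -- main chain of estimates
  have main : ∫⁻ ω, simCrossing ξ b ω ∂P ≤ (K : ℝ≥0∞) + C := by
    calc ∫⁻ ω, simCrossing ξ b ω ∂P
        ≤ ∑' n : ℕ, P {ω | (n : ℝ≥0∞) < simCrossing ξ b ω} :=
          lintegral_le_tsum_meas P _
      _ = (∑ n ∈ Finset.range K, P {ω | (n : ℝ≥0∞) < simCrossing ξ b ω})
            + ∑' n : ℕ, P {ω | ((n + K : ℕ) : ℝ≥0∞) < simCrossing ξ b ω} :=
          (Summable.sum_add_tsum_nat_add' (f := fun n => P {ω | (n : ℝ≥0∞) < simCrossing ξ b ω}) (k := K) ENNReal.summable).symm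
      _ ≤ (∑ _n ∈ Finset.range K, (1 : ℝ≥0∞))
            + ∑' n : ℕ, ∑' ℓ : Fin L, P {ω | δ ℓ ≤ |ξ ℓ (n + K) ω / ((n + K : ℕ) : ℝ) - μ ℓ|} := by
          refine add_le_add (Finset.sum_le_sum fun n _ => prob_le_one) ?_
          refine ENNReal.tsum_le_tsum fun n => ?_
          refine le_trans (measure_mono (hincl (n + K) (Nat.le_add_left K n))) ?_
          exact measure_iUnion_le _
      _ ≤ (K : ℝ≥0∞) + C := by
          refine add_le_add ?_ ?_
          · simp
          · rw [hCdef, ← Finset.sum_congr rfl (fun ℓ _ => rfl)]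
            calc ∑' n : ℕ, ∑' ℓ : Fin L, P {ω | δ ℓ ≤ |ξ ℓ (n + K) ω / ((n + K : ℕ) : ℝ) - μ ℓ|}
                = ∑' ℓ : Fin L, ∑' n : ℕ, P {ω | δ ℓ ≤ |ξ ℓ (n + K) ω / ((n + K : ℕ) : ℝ) - μ ℓ|} :=
                  ENNReal.tsum_comm
              _ ≤ ∑ ℓ : Fin L, ∑' n : ℕ, P {ω | δ ℓ ≤ |ξ ℓ n ω / n - μ ℓ|} := by
                  rw [tsum_fintype]
                  refine Finset.sum_le_sum fun ℓ _ => ?_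
                  conv_rhs => rw [← Summable.sum_add_tsum_nat_add'
                    (f := fun n => P {ω | δ ℓ ≤ |ξ ℓ n ω / n - μ ℓ|}) (k := K)
                    ENNReal.summable]
                  exact le_add_self
  refine main.trans ?_
  have hKle : (K : ℝ) ≤ (1 + η) * T + 1 :=
    (Nat.ceil_lt_add_one (by positivity)).le
  have hfin : (K : ℝ) + Cr ≤ (1 + ε) * T := by
    have hεη : ε = η + η := by rw [hηdef]; ring
    nlinarith
  calc (K : ℝ≥0∞) + C = ENNReal.ofReal ((K : ℝ) + Cr) := by
        rw [ENNReal.ofReal_add (by positivity) hCr0, ENNReal.ofReal_natCast,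
          hCrdef, ENNReal.ofReal_toReal hCt]
    _ ≤ ENNReal.ofReal ((1 + ε) * T) := ENNReal.ofReal_le_ofReal hfin
end
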